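/- Let p be a prime and let t ≥ 1 and nonnegative integers r_i, s_i (1 ≤ i ≤ t) satisfy s_i ≥ s_{i-1} + r_{i-1} + 2 for 2 ≤ i ≤ t. Set d_i = r_i + 1 and u_i = (s_i + 1) − Σ_{j=1}^{i-1}(r_j + 1). Then Σ_{i=1}^{t} (p^{d_i} − 1) · (Π_{j=1}^{i-1} p^{d_j}) · p^{u_i} · (p−1)/2 = δ · p(p−1)^2/2, where δ = Σ_{i=1}^{t} p^{s_i}(1 + p + ... + p^{r_i}). -/

import Mathlib

/-- The genus computation in the proof of Corollary 2.7 (Karemaker–Pries):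
Σ_i (p^{d_i} − 1)(Π_{j<i} p^{d_j}) p^{u_i} (p−1)/2 = δ p (p−1)²/2, where
d_i = r_i + 1, u_i = (s_i + 1) − Σ_{j<i}(r_j + 1), and
δ = Σ_i p^{s_i}(1 + p + ⋯ + p^{r_i}). -/
theorem genus_computation (p : ℕ) (hp : p.Prime) (t : ℕ) (ht : 1 ≤ t)
    (r s : ℕ → ℕ) (hs : ∀ i, 1 ≤ i → i < t → s (i - 1) + r (i - 1) + 2 ≤ s i) :
    ∑ i ∈ Finset.range t,
        ((p : ℚ) ^ (r i + 1) - 1) * (∏ j ∈ Finset.range i, (p : ℚ) ^ (r j + 1)) *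
          (p : ℚ) ^ ((s i + 1 : ℤ) - ∑ j ∈ Finset.range i, ((r j : ℤ) + 1)) *
          ((p : ℚ) - 1) / 2 =
      (∑ i ∈ Finset.range t, (p : ℚ) ^ s i * ∑ j ∈ Finset.range (r i + 1), (p : ℚ) ^ j) *
        (p : ℚ) * ((p : ℚ) - 1) ^ 2 / 2 := by
  have hp0 : (p : ℚ) ≠ 0 := by exact_mod_cast hp.ne_zero
  rw [Finset.sum_mul, Finset.sum_mul, Finset.sum_div]
  refine Finset.sum_congr rfl fun i _ => ?_
  have key : (p : ℚ) ^ (r i + 1) - 1 =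
      (∑ j ∈ Finset.range (r i + 1), (p : ℚ) ^ j) * ((p : ℚ) - 1) :=
    (geom_sum_mul _ _).symm
  have h2 : (∏ j ∈ Finset.range i, (p : ℚ) ^ (r j + 1)) *
      (p : ℚ) ^ ((s i + 1 : ℤ) - ∑ j ∈ Finset.range i, ((r j : ℤ) + 1)) =
      (p : ℚ) ^ (s i) * p := by
    have h1 : (∏ j ∈ Finset.range i, (p : ℚ) ^ (r j + 1)) =
        (p : ℚ) ^ (∑ j ∈ Finset.range i, ((r j : ℤ) + 1)) := by
      rw [Finset.prod_pow_eq_pow_sum, ← zpow_natCast]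
      congr 1
      push_cast
      ring
    rw [h1, ← zpow_add₀ hp0]
    have h3 : (∑ j ∈ Finset.range i, ((r j : ℤ) + 1)) +
        ((s i + 1 : ℤ) - ∑ j ∈ Finset.range i, ((r j : ℤ) + 1)) = (s i : ℤ) + 1 := by ring
    rw [h3, zpow_add₀ hp0, zpow_natCast, zpow_one]
  rw [key]
  linear_combination ((∑ j ∈ Finset.range (r i + 1), (p : ℚ) ^ j) * ((p : ℚ) - 1) ^ 2 / 2) * h2
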